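/- For every integer n ≥ 3, the extension complexity of the 2-dimensional cyclic polytope P^2_n = conv{(i, i^2) : i ∈ [n]} is at most 2⌊log_2(n − 1)⌋ + 2. -/

import Mathlib

noncomputable def cyclic (d : ℕ) (t₁ t₂ : ℤ) : Set (Fin d → ℝ) :=
  convexHull ℝ { x | ∃ i : ℤ, t₁ ≤ i ∧ i ≤ t₂ ∧ x = fun u : Fin d => (i : ℝ) ^ ((u : ℕ) + 1) }

/-- The extension complexity of `P ⊆ ℝ^d`: the least number `m` of inequalities in an
extended formulation, i.e. a system `A y ≤ b`, `C y = e` in some `ℝ^N` together with an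
affine projection whose image is `P`. -/
noncomputable def xc {d : ℕ} (P : Set (Fin d → ℝ)) : ℕ :=
  sInf { m : ℕ | ∃ (N k : ℕ) (A : Matrix (Fin m) (Fin N) ℝ) (b : Fin m → ℝ)
    (C : Matrix (Fin k) (Fin N) ℝ) (e : Fin k → ℝ)
    (π : (Fin N → ℝ) →ᵃ[ℝ] (Fin d → ℝ)),
    P = π '' { y | A.mulVec y ≤ b ∧ C.mulVec y = e } }


noncomputable section XCaux

/-- point on the parabola (moment curve in dim 2) -/
def myPt (i : ℝ) : Fin 2 → ℝ := fun u : Fin 2 => i ^ ((u : ℕ) + 1)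

def myV (n a : ℤ) : Set (Fin 2 → ℝ) :=
  { x | ∃ i : ℤ, a ≤ i ∧ i ≤ n ∧ x = myPt i }

def myP (n a : ℤ) : Set (Fin 2 → ℝ) := convexHull ℝ (myV n a)

def wdir (c : ℝ) : Fin 2 → ℝ := ![1, 2 * c]

/-- the "unfolding" of Q about the skew reflection fixing x = c -/
def unfold (c : ℝ) (Q : Set (Fin 2 → ℝ)) : Set (Fin 2 → ℝ) :=
  { z | ∃ p ∈ Q, ∃ μ : ℝ, z = p + μ • wdir c ∧ 2 * c - p 0 ≤ z 0 ∧ z 0 ≤ p 0 }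

lemma myPt_zero (i : ℝ) : myPt i 0 = i := by simp [myPt]

lemma myPt_one (i : ℝ) : myPt i 1 = i ^ 2 := by simp [myPt]

lemma wdir_zero (c : ℝ) : wdir c 0 = 1 := by simp [wdir]

lemma wdir_one (c : ℝ) : wdir c 1 = 2 * c := by simp [wdir]

lemma unfold_convex (c : ℝ) (Q : Set (Fin 2 → ℝ)) (hQ : Convex ℝ Q) :
    Convex ℝ (unfold c Q) := by
  rintro z1 ⟨p1, hp1, μ1, rfl, h11, h12⟩ z2 ⟨p2, hp2, μ2, rfl, h21, h22⟩ s t hs ht hst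
  refine ⟨s • p1 + t • p2, hQ hp1 hp2 hs ht hst, s * μ1 + t * μ2, ?_, ?_, ?_⟩
  · module
  · simp only [Pi.add_apply, Pi.smul_apply, smul_eq_mul, wdir_zero, mul_one] at *
    have h2c : s * (2 * c) + t * (2 * c) = 2 * c := by rw [← add_mul, hst, one_mul]
    nlinarith [mul_le_mul_of_nonneg_left h11 hs, mul_le_mul_of_nonneg_left h21 ht]
  · simp only [Pi.add_apply, Pi.smul_apply, smul_eq_mul, wdir_zero, mul_one] at *
    nlinarith [mul_le_mul_of_nonneg_left h12 hs, mul_le_mul_of_nonneg_left h22 ht]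

def sigmaLin (c : ℝ) : (Fin 2 → ℝ) →ₗ[ℝ] (Fin 2 → ℝ) where
  toFun := fun x => x - (2 * x 0) • wdir c
  map_add' := by intro x y; funext u; simp [Pi.add_apply, Pi.sub_apply]; ring
  map_smul' := by intro r x; funext u; simp [Pi.smul_apply, Pi.sub_apply, smul_eq_mul]; ring

def sigmaMap (c : ℝ) : (Fin 2 → ℝ) →ᵃ[ℝ] (Fin 2 → ℝ) where
  toFun := fun x => x + (2 * c - 2 * x 0) • wdir c
  linear := sigmaLin c
  map_vadd' := by
    intro p v
    show (v + p) + (2 * c - 2 * (v + p) 0) • wdir c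
        = (v - (2 * v 0) • wdir c) + (p + (2 * c - 2 * p 0) • wdir c)
    have : (v + p) 0 = v 0 + p 0 := rfl
    rw [this]
    module

lemma sigmaMap_apply (c : ℝ) (x : Fin 2 → ℝ) :
    sigmaMap c x = x + (2 * c - 2 * x 0) • wdir c := rfl

lemma sigmaMap_pt (c : ℝ) (j : ℝ) : sigmaMap c (myPt j) = myPt (2 * c - j) := by
  funext u
  fin_cases u <;>
    simp [sigmaMap_apply, myPt, wdir, Pi.add_apply, Pi.smul_apply, smul_eq_mul] <;> ring

lemma unfold_myP (n a a' : ℤ) (han : a ≤ n) (h2 : a + n ≤ 2 * a') (h3 : 2 * a' ≤ a + n + 1) :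
    myP n a = unfold (((a : ℝ) + (n : ℝ)) / 2) (myP n a') := by
  set c : ℝ := ((a : ℝ) + (n : ℝ)) / 2 with hc
  have h2c : 2 * c = (a : ℝ) + (n : ℝ) := by rw [hc]; ring
  have hVmono : myV n a' ⊆ myV n a := by
    rintro x ⟨i, hi1, hi2, rfl⟩; exact ⟨i, by omega, hi2, rfl⟩
  apply Set.Subset.antisymm
  · -- convex hull of vertices ⊆ unfold
    apply convexHull_min _ (unfold_convex _ _ (convex_convexHull ℝ _))
    rintro x ⟨i, hi1, hi2, rfl⟩
    by_cases hcase : a + n ≤ 2 * i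
    · refine ⟨myPt i, subset_convexHull ℝ _ ⟨i, by omega, hi2, rfl⟩, 0, by module, ?_, le_refl _⟩
      rw [myPt_zero]
      have : (a : ℝ) + n ≤ 2 * i := by exact_mod_cast hcase
      linarith
    · refine ⟨myPt ((a : ℝ) + n - i), subset_convexHull ℝ _
        ⟨a + n - i, by omega, by omega, by push_cast; ring_nf⟩,
        (i : ℝ) - ((a : ℝ) + n - i), ?_, ?_, ?_⟩
      · funext u
        fin_cases u <;>
          simp [myPt, wdir, Pi.add_apply, Pi.smul_apply, smul_eq_mul] <;> ring
      · rw [myPt_zero, myPt_zero]; linarith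
      · rw [myPt_zero, myPt_zero]
        have : 2 * (i : ℝ) ≤ (a : ℝ) + n - 1 := by exact_mod_cast (by omega : 2 * i ≤ a + n - 1)
        linarith
  · -- unfold ⊆ convex hull
    rintro z ⟨p, hp, μ, rfl, hge, hle⟩
    have hp' : p ∈ myP n a := convexHull_mono hVmono hp
    have hσ : sigmaMap c p ∈ myP n a := by
      have himg : sigmaMap c '' myP n a' ⊆ myP n a := by
        rw [myP, AffineMap.image_convexHull]
        apply convexHull_mono
        rintro x ⟨y, ⟨j, hj1, hj2, rfl⟩, rfl⟩
        refine ⟨a + n - j, by omega, by omega, ?_⟩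
        rw [sigmaMap_pt, h2c]; congr 1; push_cast; ring
      exact himg ⟨p, hp, rfl⟩
    have hz0 : (p + μ • wdir c) 0 = p 0 + μ := by
      simp [Pi.add_apply, Pi.smul_apply, wdir_zero]
    rw [hz0] at hge hle
    have hD : 2 * c - 2 * p 0 ≤ μ := by linarith
    have hμ : μ ≤ 0 := by linarith
    rcases eq_or_lt_of_le (le_trans hD hμ) with hD0 | hDneg
    · have hμ0 : μ = 0 := le_antisymm hμ (hD0 ▸ hD)
      have : p + μ • wdir c = p := by rw [hμ0]; module
      rw [this]; exact hp'
    · have hDne : 2 * c - 2 * p 0 ≠ 0 := by linarith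
      have hmem := (convex_convexHull ℝ (myV n a)).add_smul_sub_mem hp' hσ
        (t := μ / (2 * c - 2 * p 0))
        ⟨by rw [← neg_div_neg_eq]; exact div_nonneg (by linarith) (by linarith),
         div_le_one_iff.mpr (Or.inr (Or.inr ⟨hDneg, hD⟩))⟩
      have : sigmaMap c p - p = (2 * c - 2 * p 0) • wdir c := by
        rw [sigmaMap_apply]; module
      rw [this, smul_smul, div_mul_cancel₀ _ hDne] at hmem
      exact hmem

def HasEF (P : Set (Fin 2 → ℝ)) (m : ℕ) : Prop :=
  ∃ (N k : ℕ) (A : Matrix (Fin m) (Fin N) ℝ) (b : Fin m → ℝ)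
    (C : Matrix (Fin k) (Fin N) ℝ) (e : Fin k → ℝ)
    (π : (Fin N → ℝ) →ᵃ[ℝ] (Fin 2 → ℝ)),
    P = π '' { y | A.mulVec y ≤ b ∧ C.mulVec y = e }

lemma hasEF_segment (n : ℤ) : HasEF (myP n (n - 1)) 2 := by
  refine ⟨2, 1, ![![1, 0], ![-1, 0]], ![(n : ℝ), 1 - n],
    ![![-(2 * (n : ℝ) - 1), 1]], ![-((n : ℝ) * (n - 1))], AffineMap.id ℝ _, ?_⟩
  have hV : myV n (n - 1) = {myPt ((n : ℝ) - 1), myPt (n : ℝ)} := by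
    ext x
    constructor
    · rintro ⟨i, h1, h2, rfl⟩
      have : i = n - 1 ∨ i = n := by omega
      rcases this with rfl | rfl
      · left; push_cast; rfl
      · right; rfl
    · rintro (rfl | rfl)
      · exact ⟨n - 1, le_refl _, by omega, by push_cast; rfl⟩
      · exact ⟨n, by omega, le_refl _, rfl⟩
  have himg : ⇑(AffineMap.id ℝ (Fin 2 → ℝ)) = id := rfl
  rw [myP, hV, convexHull_pair, himg, Set.image_id]
  ext z
  constructor
  · rintro ⟨s, t, hs, ht, hst, rfl⟩
    have e0 : (s • myPt ((n : ℝ) - 1) + t • myPt (n : ℝ)) 0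
        = s * ((n : ℝ) - 1) + t * n := by
      simp [myPt, Pi.add_apply, Pi.smul_apply, smul_eq_mul]
    have e1 : (s • myPt ((n : ℝ) - 1) + t • myPt (n : ℝ)) 1
        = s * ((n : ℝ) - 1) ^ 2 + t * (n : ℝ) ^ 2 := by
      simp [myPt, Pi.add_apply, Pi.smul_apply, smul_eq_mul]
    constructor
    · rw [Pi.le_def]
      intro i
      fin_cases i <;>
        simp only [Matrix.mulVec, dotProduct, Fin.sum_univ_two, Matrix.cons_val',
          Matrix.cons_val_zero, Matrix.cons_val_one, Matrix.head_cons, Matrix.empty_val',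
          Matrix.cons_val_fin_one, Matrix.head_fin_const, Fin.mk_zero, Fin.mk_one, e0] <;> nlinarith
    · funext i
      fin_cases i
      simp only [Matrix.mulVec, dotProduct, Fin.sum_univ_two, Matrix.cons_val',
        Matrix.cons_val_zero, Matrix.cons_val_one, Matrix.head_cons, Matrix.empty_val',
        Matrix.cons_val_fin_one, Matrix.head_fin_const, Fin.mk_zero, Fin.mk_one, e0, e1]
      linear_combination (-(n : ℝ) * (n - 1)) * hst
  · rintro ⟨hineq, heq⟩
    have h0 := hineq 0
    have h1 := hineq 1
    have hEq := congrFun heq 0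
    simp only [Matrix.mulVec, dotProduct, Fin.sum_univ_two, Matrix.cons_val',
      Matrix.cons_val_zero, Matrix.cons_val_one, Matrix.head_cons, Matrix.empty_val',
      Matrix.cons_val_fin_one, Matrix.head_fin_const, Fin.mk_zero, Fin.mk_one] at h0 h1 hEq
    refine ⟨(n : ℝ) - z 0, z 0 - ((n : ℝ) - 1), by linarith, by linarith, by ring, ?_⟩
    funext u
    fin_cases u
    · simp [myPt, Pi.add_apply, Pi.smul_apply, smul_eq_mul]; ring
    · simp [myPt, Pi.add_apply, Pi.smul_apply, smul_eq_mul]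
      linear_combination -hEq

lemma snoc_dot {N : ℕ} (v : Fin N → ℝ) (x : ℝ) (y' : Fin (N + 1) → ℝ) :
    (∑ j, (Fin.snoc v x : Fin (N + 1) → ℝ) j * y' j)
      = (∑ j, v j * Fin.init y' j) + x * y' (Fin.last N) := by
  rw [Fin.sum_univ_castSucc]
  simp [Fin.snoc_castSucc, Fin.snoc_last, Fin.init]

lemma lin_apply_eq_sum {N : ℕ} (π : (Fin N → ℝ) →ₗ[ℝ] (Fin 2 → ℝ)) (y : Fin N → ℝ) :
    π y 0 = ∑ j, y j * (π (fun j' => if j = j' then 1 else 0)) 0 := by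
  conv_lhs => rw [pi_eq_sum_univ y]
  rw [map_sum]
  simp [Finset.sum_apply, Pi.smul_apply, smul_eq_mul]

def extLin {N : ℕ} (c : ℝ) (π : (Fin N → ℝ) →ᵃ[ℝ] (Fin 2 → ℝ)) :
    (Fin (N + 1) → ℝ) →ₗ[ℝ] (Fin 2 → ℝ) where
  toFun := fun y' => π.linear (Fin.init y') + y' (Fin.last N) • wdir c
  map_add' := by
    intro x y
    have hi : Fin.init (x + y) = Fin.init x + Fin.init y := rfl
    have hl : (x + y) (Fin.last N) = x (Fin.last N) + y (Fin.last N) := rfl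
    rw [hi, hl, map_add]
    module
  map_smul' := by
    intro r x
    have hi : Fin.init (r • x) = r • Fin.init x := rfl
    have hl : (r • x) (Fin.last N) = r * x (Fin.last N) := rfl
    rw [hi, hl, map_smul, RingHom.id_apply]
    module

def extProj {N : ℕ} (c : ℝ) (π : (Fin N → ℝ) →ᵃ[ℝ] (Fin 2 → ℝ)) :
    (Fin (N + 1) → ℝ) →ᵃ[ℝ] (Fin 2 → ℝ) where
  toFun := fun y' => π (Fin.init y') + y' (Fin.last N) • wdir c
  linear := extLin c π
  map_vadd' := by
    intro p v
    have hi : Fin.init (v +ᵥ p) = Fin.init v + Fin.init p := rfl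
    have hl : (v +ᵥ p) (Fin.last N) = v (Fin.last N) + p (Fin.last N) := rfl
    show π (Fin.init (v +ᵥ p)) + (v +ᵥ p) (Fin.last N) • wdir c
        = (π.linear (Fin.init v) + v (Fin.last N) • wdir c)
          +ᵥ (π (Fin.init p) + p (Fin.last N) • wdir c)
    rw [hi, hl]
    have h2 : π (Fin.init v + Fin.init p) = π.linear (Fin.init v) + π (Fin.init p) := by
      simpa [vadd_eq_add] using π.map_vadd (Fin.init p) (Fin.init v)
    rw [h2]
    simp only [vadd_eq_add]
    module

lemma extProj_apply {N : ℕ} (c : ℝ) (π : (Fin N → ℝ) →ᵃ[ℝ] (Fin 2 → ℝ)) (y' : Fin (N+1) → ℝ) :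
    extProj c π y' = π (Fin.init y') + y' (Fin.last N) • wdir c := rfl

lemma hasEF_unfold (c : ℝ) (P : Set (Fin 2 → ℝ)) (m : ℕ) (h : HasEF P m) :
    HasEF (unfold c P) (m + 2) := by
  obtain ⟨N, k, A, b, C, e, π, rfl⟩ := h
  set r : Fin N → ℝ := fun j => (π.linear (fun j' => if j = j' then 1 else 0)) 0 with hr
  have hπ0 : ∀ y : Fin N → ℝ, (π y) 0 = (∑ j, y j * r j) + (π 0) 0 := by
    intro y
    have hd : π y = π.linear y + π 0 := by
      have := π.map_vadd' 0 y
      simpa using this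
    rw [hd]
    have : (π.linear y + π 0) 0 = π.linear y 0 + (π 0) 0 := rfl
    rw [this, lin_apply_eq_sum]
  refine ⟨N + 1, k,
    Matrix.of (Fin.addCases (fun i => Fin.snoc (A i) 0)
      (fun i : Fin 2 => ![(Fin.snoc (0 : Fin N → ℝ) 1 : Fin (N+1) → ℝ),
        (Fin.snoc (fun j => -2 * r j) (-1) : Fin (N+1) → ℝ)] i)),
    Fin.addCases b ![0, 2 * (π 0) 0 - 2 * c],
    Matrix.of (fun i => Fin.snoc (C i) 0), e, extProj c π, ?_⟩
  ext z
  constructor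
  · rintro ⟨p, ⟨y, ⟨hA, hC⟩, rfl⟩, μ, rfl, hge, hle⟩
    refine ⟨Fin.snoc y μ, ⟨?_, ?_⟩, ?_⟩
    · intro i
      refine Fin.addCases ?_ ?_ i
      · intro i
        rw [Matrix.mulVec, dotProduct]
        simp only [Matrix.of_apply, Fin.addCases_left, Fin.addCases_left (motive := fun _ => ℝ)]
        rw [snoc_dot]
        simp only [Fin.init_snoc, Fin.snoc_last, zero_mul, add_zero]
        exact hA i
      · intro i
        rw [Matrix.mulVec, dotProduct]
        simp only [Matrix.of_apply, Fin.addCases_right, Fin.addCases_right (motive := fun _ => ℝ)]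
        fin_cases i
        · simp only [Fin.mk_zero, Fin.mk_one, Fin.isValue, Matrix.cons_val_zero]
          rw [snoc_dot]
          simp only [Fin.init_snoc, Fin.snoc_last, Pi.zero_apply, zero_mul,
            Finset.sum_const_zero, one_mul, zero_add]
          have h1 : (π y + μ • wdir c) 0 = (π y) 0 + μ := by
            simp [Pi.add_apply, Pi.smul_apply, wdir_zero]
          rw [h1] at hle
          linarith
        · simp only [Fin.mk_zero, Fin.mk_one, Fin.isValue, Matrix.cons_val_one, Matrix.head_cons,
            Matrix.cons_val_zero]
          rw [snoc_dot]
          simp only [Fin.init_snoc, Fin.snoc_last]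
          have h1 : (π y + μ • wdir c) 0 = (π y) 0 + μ := by
            simp [Pi.add_apply, Pi.smul_apply, wdir_zero]
          rw [h1] at hge
          have h2 := hπ0 y
          have : ∑ j, (-2 * r j) * y j = -2 * ∑ j, y j * r j := by
            rw [Finset.mul_sum]; congr 1; funext j; ring
          rw [this]
          linarith
    · funext i
      rw [Matrix.mulVec, dotProduct]
      simp only [Matrix.of_apply]
      rw [snoc_dot]
      simp only [Fin.init_snoc, Fin.snoc_last, zero_mul, add_zero]
      exact congrFun hC i
    · rw [extProj_apply, Fin.init_snoc, Fin.snoc_last]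
  · rintro ⟨y', ⟨hA, hC⟩, rfl⟩
    set y := Fin.init y' with hy
    set μ := y' (Fin.last N) with hμ
    have hAy : A.mulVec y ≤ b := by
      intro i
      have := hA (Fin.castAdd 2 i)
      rw [Matrix.mulVec, dotProduct] at this
      simp only [Matrix.of_apply, Fin.addCases_left, Fin.addCases_left (motive := fun _ => ℝ)] at this
      rw [snoc_dot] at this
      simpa [Matrix.mulVec, dotProduct] using this
    have hCy : C.mulVec y = e := by
      funext i
      have := congrFun hC i
      rw [Matrix.mulVec, dotProduct] at this
      simp only [Matrix.of_apply] at this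
      rw [snoc_dot] at this
      simpa [Matrix.mulVec, dotProduct] using this
    have hrow0 := hA (Fin.natAdd m 0)
    have hrow1 := hA (Fin.natAdd m 1)
    rw [Matrix.mulVec, dotProduct] at hrow0 hrow1
    simp only [Matrix.of_apply, Fin.addCases_right, Fin.addCases_right (motive := fun _ => ℝ),
      Matrix.cons_val_zero, Matrix.cons_val_one, Matrix.head_cons] at hrow0 hrow1
    rw [snoc_dot] at hrow0 hrow1
    simp only [Fin.init_snoc, Fin.snoc_last, Pi.zero_apply, zero_mul,
      Finset.sum_const_zero, one_mul, zero_add] at hrow0 hrow1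
    rw [← hμ] at hrow0
    rw [← hy, ← hμ] at hrow1
    have hz : (extProj c π) y' = π y + μ • wdir c := by
      rw [extProj_apply, ← hy, ← hμ]
    refine ⟨π y, ⟨y, ⟨hAy, hCy⟩, rfl⟩, μ, hz, ?_, ?_⟩
    all_goals rw [hz]
    · have h1 : (π y + μ • wdir c) 0 = (π y) 0 + μ := by
        simp [Pi.add_apply, Pi.smul_apply, wdir_zero]
      rw [h1]
      have h2 := hπ0 y
      have h3 : ∑ j, (-2 * r j) * y j = -2 * ∑ j, y j * r j := by
        rw [Finset.mul_sum]; congr 1; funext j; ring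
      rw [h3] at hrow1
      linarith
    · have h1 : (π y + μ • wdir c) 0 = (π y) 0 + μ := by
        simp [Pi.add_apply, Pi.smul_apply, wdir_zero]
      rw [h1]
      linarith

lemma hasEF_step (n a a' : ℤ) (han : a ≤ n) (h2 : a + n ≤ 2 * a') (h3 : 2 * a' ≤ a + n + 1)
    (m : ℕ) (h : HasEF (myP n a') m) : HasEF (myP n a) (m + 2) := by
  rw [unfold_myP n a a' han h2 h3]
  exact hasEF_unfold _ _ _ h

lemma hasEF_chain (nn : ℕ) (hnn : 3 ≤ nn) :
    ∀ j : ℕ, j ≤ Nat.log 2 (nn - 1) →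
      HasEF (myP (nn : ℤ) ((nn : ℤ) - ((nn - 1) / 2 ^ (Nat.log 2 (nn - 1) - j) : ℕ)))
        (2 + 2 * j) := by
  set t := Nat.log 2 (nn - 1) with ht
  intro j
  induction j with
  | zero =>
    intro _
    have h1 : 2 ^ t ≤ nn - 1 := Nat.pow_log_le_self 2 (by omega)
    have h2 : nn - 1 < 2 ^ (t + 1) := Nat.lt_pow_succ_log_self (by norm_num) _
    have hq : (nn - 1) / 2 ^ (t - 0) = 1 := by
      rw [Nat.sub_zero]
      have hpos : 0 < 2 ^ t := Nat.pow_pos (by norm_num)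
      have hlow : 1 ≤ (nn - 1) / 2 ^ t := (Nat.one_le_div_iff hpos).2 h1
      have hhigh : (nn - 1) / 2 ^ t < 2 := by
        rw [Nat.div_lt_iff_lt_mul hpos]
        calc nn - 1 < 2 ^ (t + 1) := h2
        _ = 2 * 2 ^ t := by ring
      omega
    rw [hq]
    have : ((nn : ℤ) - (1 : ℕ)) = (nn : ℤ) - 1 := by push_cast; ring
    rw [this]
    simpa using hasEF_segment (nn : ℤ)
  | succ j ih =>
    intro hj
    have hjt : j ≤ t := by omega
    have ihh := ih hjt
    set k := t - (j + 1) with hk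
    have hk1 : t - j = k + 1 := by omega
    rw [hk1] at ihh
    have hqq : (nn - 1) / 2 ^ (k + 1) = ((nn - 1) / 2 ^ k) / 2 := by
      rw [pow_succ, Nat.div_div_eq_div_mul]
    set q0 : ℕ := (nn - 1) / 2 ^ k with hq0
    set q1 : ℕ := (nn - 1) / 2 ^ (k + 1) with hq1
    have hd : q1 = q0 / 2 := hqq
    clear_value q0 q1
    have happ := hasEF_step (nn : ℤ) ((nn : ℤ) - q0) ((nn : ℤ) - q1)
      (by omega) (by omega) (by omega) _ ihh
    have : 2 + 2 * j + 2 = 2 + 2 * (j + 1) := by ring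
    rw [this] at happ
    exact happ

end XCaux

theorem xc_cyclic_two_dim (n : ℕ) (hn : 3 ≤ n) :
    xc (cyclic 2 1 (n : ℤ)) ≤ 2 * Nat.log 2 (n - 1) + 2 := by
  have hchain := hasEF_chain n hn (Nat.log 2 (n - 1)) le_rfl
  simp only [Nat.sub_self, pow_zero, Nat.div_one] at hchain
  have hone : ((n : ℤ) - ((n - 1 : ℕ) : ℤ)) = 1 := by omega
  rw [hone] at hchain
  have hc : cyclic 2 1 (n : ℤ) = myP (n : ℤ) 1 := rfl
  rw [hc]
  have hle : xc (myP (n : ℤ) 1) ≤ 2 + 2 * Nat.log 2 (n - 1) := Nat.sInf_le hchain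
  omega
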